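/- Let G be a nontrivial finite group and take the generating set G\{1} with d = |G| − 1 generators. Then the relation module R = R_{|G|−1} is isomorphic as a ZG-module to ΔG ⊗_Z ΔG with diagonal G-action. -/

import Mathlib

open Finsupp TensorProduct Representation

noncomputable section

/-- The augmentation map `ℤ[G] → ℤ`. -/
def aug (S : Type) : (S →₀ ℤ) →ₗ[ℤ] ℤ :=
  Finsupp.linearCombination ℤ (fun _ : S => (1 : ℤ))

/-- The permutation representation on `S →₀ ℤ` (the pre-2025 `Representation.ofMulAction`). -/
def ofMulActionFinsupp (k G H : Type) [CommSemiring k] [Monoid G] [MulAction G H] :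
    Representation k G (H →₀ k) where
  toFun g := Finsupp.lmapDomain k k (g • ·)
  map_one' := by ext x y; simp
  map_mul' x y := by ext z w; simp [mul_smul]

theorem aug_ofMulAction {G S : Type} [Group G] [MulAction G S] (g : G) (f : S →₀ ℤ) :
    aug S ((ofMulActionFinsupp ℤ G S) g f) = aug S f := by
  simp only [aug, ofMulActionFinsupp, MonoidHom.coe_mk, OneHom.coe_mk, Finsupp.lmapDomain_apply,
    Finsupp.linearCombination_mapDomain]
  rfl

/-- Restriction of a representation to an invariant submodule. -/
def subRep {G : Type} [Group G] {V : Type} [AddCommGroup V] [Module ℤ V]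
    (ρ : Representation ℤ G V) (p : Submodule ℤ V) (hp : ∀ g, ∀ x ∈ p, ρ g x ∈ p) :
    Representation ℤ G p where
  toFun g := (ρ g).restrict (hp g)
  map_one' := by ext x; simp [LinearMap.restrict_apply]
  map_mul' g h := by ext x; simp [LinearMap.restrict_apply]

/-- The representation of `G` on the augmentation ideal `ΔG ⊆ ℤ[G]` (left
multiplication action). -/
def deltaG (G : Type) [Group G] : Representation ℤ G (LinearMap.ker (aug G)) :=
  subRep (ofMulActionFinsupp ℤ G G) (LinearMap.ker (aug G))
    (fun g x hx => by
      simp only [LinearMap.mem_ker] at hx ⊢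
      rw [aug_ofMulAction, hx])

/-- The Gruenberg map: with `F` free on `x_i` and `ΔF` free over `ℤ[F]` on the
`x_i − 1`, the induced module `ℤ[G] ⊗_{ℤ[F]} ΔF` is identified with `Fin d → ℤ[G]`
via the basis `1 ⊗ (x_i − 1)`, and the map sends `1 ⊗ (x_i − 1) ↦ g_i − 1`. -/
def gruenbergMap {G : Type} [Group G] {d : ℕ} (g : Fin d → G) :
    (Fin d → MonoidAlgebra ℤ G) →ₗ[MonoidAlgebra ℤ G] MonoidAlgebra ℤ G where
  toFun v := ∑ i, v i * (MonoidAlgebra.single (g i) 1 - 1)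
  map_add' v w := by simp [add_mul, Finset.sum_add_distrib]
  map_smul' a v := by simp [smul_eq_mul, mul_assoc, Finset.mul_sum]

namespace Stmt5Aux

set_option linter.unusedSectionVars false
attribute [local instance 2000] TensorProduct.leftModule
variable {G : Type} [Group G] [DecidableEq G]

lemma aug_single {S : Type} (a : S) (c : ℤ) : aug S (Finsupp.single a c) = c := by
  simp [aug]

/-- `single a 1 - single b 1` as an element of the augmentation ideal. -/
def kgen (a b : G) : LinearMap.ker (aug G) :=
  ⟨Finsupp.single a 1 - Finsupp.single b 1, by
    simp [LinearMap.mem_ker, map_sub, aug_single]⟩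

lemma kgen_val (a b : G) :
    ((kgen a b : LinearMap.ker (aug G)) : G →₀ ℤ)
      = Finsupp.single a 1 - Finsupp.single b 1 := rfl

def toK : ({x : G // x ≠ 1} →₀ ℤ) →ₗ[ℤ] LinearMap.ker (aug G) :=
  Finsupp.linearCombination ℤ (fun g => kgen g.1 1)

def resK : (G →₀ ℤ) →ₗ[ℤ] ({x : G // x ≠ 1} →₀ ℤ) where
  toFun f := f.subtypeDomain (fun x => x ≠ 1)
  map_add' _ _ := Finsupp.subtypeDomain_add
  map_smul' c f := by ext x; simp

lemma resK_single_ne {a : G} (ha : a ≠ 1) (c : ℤ) :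
    resK (Finsupp.single a c) = Finsupp.single (⟨a, ha⟩ : {x : G // x ≠ 1}) c := by
  ext ⟨x, hx⟩
  classical
  show (Finsupp.single a c) x = _
  rw [Finsupp.single_apply, Finsupp.single_apply]
  simp [Subtype.ext_iff]

lemma resK_single_one (c : ℤ) : resK (Finsupp.single (1 : G) c) = 0 := by
  ext ⟨x, hx⟩
  simp [resK, Finsupp.subtypeDomain_apply, Finsupp.single_eq_of_ne hx]

lemma toK_resK (f : G →₀ ℤ) :
    ((toK (resK f) : LinearMap.ker (aug G)) : G →₀ ℤ)
      = f - Finsupp.single 1 (aug G f) := by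
  have h : (LinearMap.ker (aug G)).subtype ∘ₗ toK ∘ₗ resK
      = LinearMap.id - (Finsupp.lsingle 1) ∘ₗ (aug G) := by
    apply Finsupp.lhom_ext
    intro a c
    by_cases ha : a = 1
    · subst ha
      simp [toK, resK_single_one, aug_single]
    · simp [toK, resK_single_ne ha, kgen_val, aug_single, smul_sub, Finsupp.smul_single]
  exact DFunLike.congr_fun h f

def kerAugEquiv : (LinearMap.ker (aug G)) ≃ₗ[ℤ] ({x : G // x ≠ 1} →₀ ℤ) :=
  LinearEquiv.ofLinear (resK ∘ₗ (LinearMap.ker (aug G)).subtype) toK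
    (by
      apply Finsupp.lhom_ext
      rintro ⟨a, ha⟩ c
      simp [toK, kgen_val, resK_single_ne ha, resK_single_one, smul_sub]
      )
    (by
      apply LinearMap.ext
      intro x
      apply Subtype.ext
      have hx : aug G (x : G →₀ ℤ) = 0 := x.2
      simpa [hx] using toK_resK (x : G →₀ ℤ))

def bK : Module.Basis {x : G // x ≠ 1} ℤ (LinearMap.ker (aug G)) := Module.Basis.ofRepr kerAugEquiv

lemma bK_apply (g : {x : G // x ≠ 1}) : bK g = kgen g.1 1 := by
  rw [← bK.repr_symm_single_one]
  show kerAugEquiv.symm _ = _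
  rw [kerAugEquiv, LinearEquiv.ofLinear_symm_apply]
  simp [toK]



lemma rho_val (γ : G) (x : LinearMap.ker (aug G)) :
    ((deltaG G γ x : LinearMap.ker (aug G)) : G →₀ ℤ)
      = ofMulActionFinsupp ℤ G G γ (x : G →₀ ℤ) := rfl

lemma rho_kgen (γ a b : G) : deltaG G γ (kgen a b) = kgen (γ * a) (γ * b) := by
  apply Subtype.ext
  rw [rho_val, kgen_val, kgen_val, map_sub]
  simp [ofMulActionFinsupp, smul_eq_mul]

lemma rho_rho_inv (γ : G) (x : LinearMap.ker (aug G)) :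
    deltaG G γ (deltaG G γ⁻¹ x) = x := by
  have : (deltaG G γ) * (deltaG G γ⁻¹) = 1 := by
    rw [← map_mul, mul_inv_cancel, map_one]
  calc deltaG G γ (deltaG G γ⁻¹ x) = ((deltaG G γ) * (deltaG G γ⁻¹)) x := rfl
    _ = x := by rw [this]; rfl

lemma rho_inv_rho (γ : G) (x : LinearMap.ker (aug G)) :
    deltaG G γ⁻¹ (deltaG G γ x) = x := by
  have : (deltaG G γ⁻¹) * (deltaG G γ) = 1 := by
    rw [← map_mul, inv_mul_cancel, map_one]
  calc deltaG G γ⁻¹ (deltaG G γ x) = ((deltaG G γ⁻¹) * (deltaG G γ)) x := rfl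
    _ = x := by rw [this]; rfl

/-- The twist `single h x ↦ single h (γ_h • x)` on `G →₀ ΔG`. -/
def tw : (G →₀ LinearMap.ker (aug G)) ≃ₗ[ℤ] (G →₀ LinearMap.ker (aug G)) :=
  LinearEquiv.ofLinear
    (Finsupp.lsum ℤ fun h => (Finsupp.lsingle h) ∘ₗ (deltaG G h : _ →ₗ[ℤ] _))
    (Finsupp.lsum ℤ fun h => (Finsupp.lsingle h) ∘ₗ (deltaG G h⁻¹ : _ →ₗ[ℤ] _))
    (by
      apply Finsupp.lhom_ext
      intro h x
      simp [rho_rho_inv])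
    (by
      apply Finsupp.lhom_ext
      intro h x
      simp [rho_inv_rho])

def alphaEquiv : (LinearMap.ker (aug G)) ⊗[ℤ] (G →₀ ℤ) ≃ₗ[ℤ] (LinearMap.ker (aug G)) ⊗[ℤ] (G →₀ ℤ) :=
  finsuppScalarRight ℤ ℤ (LinearMap.ker (aug G)) G ≪≫ₗ tw
    ≪≫ₗ (finsuppScalarRight ℤ ℤ (LinearMap.ker (aug G)) G).symm

lemma alpha_tmul (x : LinearMap.ker (aug G)) (h : G) :
    alphaEquiv (x ⊗ₜ[ℤ] Finsupp.single h 1)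
      = (deltaG G h x) ⊗ₜ[ℤ] Finsupp.single h 1 := by
  rw [alphaEquiv, LinearEquiv.trans_apply, LinearEquiv.trans_apply]
  rw [finsuppScalarRight_apply_tmul]
  rw [Finsupp.sum_single_index (by simp)]
  rw [one_smul]
  rw [show tw (Finsupp.single h x) = Finsupp.single h (deltaG G h x) by simp [tw]]
  rw [finsuppScalarRight_symm_apply_single]

def basisKA : Module.Basis ({x : G // x ≠ 1} × G) ℤ
    ((LinearMap.ker (aug G)) ⊗[ℤ] (G →₀ ℤ)) :=
  (bK.tensorProduct Finsupp.basisSingleOne).map alphaEquiv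

lemma basisKA_apply (g : {x : G // x ≠ 1}) (h : G) :
    basisKA (g, h) = (kgen (h * g.1) h) ⊗ₜ[ℤ] Finsupp.single h 1 := by
  rw [basisKA, Module.Basis.map_apply, Module.Basis.tensorProduct_apply, bK_apply]
  rw [show (Finsupp.basisSingleOne : Module.Basis G ℤ (G →₀ ℤ)) h = Finsupp.single h 1 from rfl]
  rw [alpha_tmul, rho_kgen, mul_one]

variable {d : ℕ}

def srcB : Module.Basis (Σ _ : Fin d, G) ℤ (Fin d → MonoidAlgebra ℤ G) :=
  Pi.basis fun _ => MonoidAlgebra.basis G ℤ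

def sigmaEquiv (e : Fin d ≃ {x : G // x ≠ 1}) :
    (Σ _ : Fin d, G) ≃ ({x : G // x ≠ 1} × G) :=
  (Equiv.sigmaEquivProd (Fin d) G).trans (Equiv.prodCongr e (Equiv.refl G))

def Phi (e : Fin d ≃ {x : G // x ≠ 1}) :
    (Fin d → MonoidAlgebra ℤ G) ≃ₗ[ℤ] (LinearMap.ker (aug G)) ⊗[ℤ] (G →₀ ℤ) :=
  srcB.equiv basisKA (sigmaEquiv e)

lemma srcB_apply (i : Fin d) (h : G) :
    (srcB ⟨i, h⟩ : Fin d → MonoidAlgebra ℤ G) = Pi.single i (MonoidAlgebra.single h 1) := by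
  rw [srcB, Pi.basis_apply]
  rfl

lemma Phi_single (e : Fin d ≃ {x : G // x ≠ 1}) (i : Fin d) (h : G) :
    Phi e (Pi.single i (MonoidAlgebra.single h 1))
      = (kgen (h * (e i).1) h) ⊗ₜ[ℤ] Finsupp.single h 1 := by
  rw [← srcB_apply, Phi, Module.Basis.equiv_apply]
  rw [show sigmaEquiv e ⟨i, h⟩ = (e i, h) from rfl]
  rw [basisKA_apply]

def smulMap (γ : G) : (Fin d → MonoidAlgebra ℤ G) →ₗ[ℤ] (Fin d → MonoidAlgebra ℤ G) where
  toFun v := (MonoidAlgebra.single γ (1 : ℤ)) • v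
  map_add' v w := smul_add _ v w
  map_smul' z v := smul_comm _ z v

lemma smul_pi_single (γ : G) (i : Fin d) (x : MonoidAlgebra ℤ G) :
    (MonoidAlgebra.single γ (1 : ℤ)) • (Pi.single i x : Fin d → MonoidAlgebra ℤ G)
      = (Pi.single i (MonoidAlgebra.single γ (1 : ℤ) * x) : Fin d → MonoidAlgebra ℤ G) := by
  ext j
  rcases eq_or_ne j i with rfl | hj
  · simp [smul_eq_mul]
  · simp [Pi.single_eq_of_ne hj, smul_eq_mul]

/-- `ι ∘ π̂ ∘ Φ = gruenbergMap`. -/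
lemma comp_eq (e : Fin d ≃ {x : G // x ≠ 1}) :
    (LinearMap.ker (aug G)).subtype ∘ₗ
        ((TensorProduct.rid ℤ (LinearMap.ker (aug G))).toLinearMap ∘ₗ
          LinearMap.lTensor (LinearMap.ker (aug G)) (aug G)) ∘ₗ (Phi e).toLinearMap
      = (MonoidAlgebra.coeffLinearEquiv ℤ).toLinearMap ∘ₗ (gruenbergMap (fun i => (e i).1)).restrictScalars ℤ := by
  apply srcB.ext
  rintro ⟨i, h⟩
  rw [srcB_apply]
  have lhs : ((LinearMap.ker (aug G)).subtype ∘ₗ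
        ((TensorProduct.rid ℤ (LinearMap.ker (aug G))).toLinearMap ∘ₗ
          LinearMap.lTensor (LinearMap.ker (aug G)) (aug G)) ∘ₗ (Phi e).toLinearMap)
        (Pi.single i (MonoidAlgebra.single h 1))
      = Finsupp.single (h * (e i).1) 1 - Finsupp.single h 1 := by
    simp only [LinearMap.comp_apply, LinearEquiv.coe_coe]
    rw [Phi_single, LinearMap.lTensor_tmul]
    rw [show aug G (Finsupp.single h 1) = 1 from aug_single h 1]
    rw [TensorProduct.rid_tmul, one_smul]
    exact kgen_val _ _
  rw [lhs]
  show _ = MonoidAlgebra.coeff (∑ j, (Pi.single i (MonoidAlgebra.single h (1:ℤ)) : Fin d → MonoidAlgebra ℤ G) j *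
      (MonoidAlgebra.single ((e j).1) (1:ℤ) - 1))
  rw [Finset.sum_eq_single i]
  · rw [Pi.single_eq_same, mul_sub, mul_one, MonoidAlgebra.single_mul_single, mul_one]
    rfl
  · intro b _ hb
    rw [Pi.single_eq_of_ne hb, zero_mul]
  · intro hi
    exact absurd (Finset.mem_univ i) hi

lemma single_one_mul (γ : G) (f : MonoidAlgebra ℤ G) :
    MonoidAlgebra.single γ (1:ℤ) * f = Representation.ofMulAction ℤ G G γ f := by
  ext y
  rw [MonoidAlgebra.single_mul_apply, one_mul, Representation.ofMulAction_apply]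
  rfl

lemma Phi_comm (e : Fin d ≃ {x : G // x ≠ 1}) (γ : G) :
    (Phi e).toLinearMap ∘ₗ smulMap γ
      = (TensorProduct.map (deltaG G γ) (ofMulActionFinsupp ℤ G G γ)) ∘ₗ
          (Phi e).toLinearMap := by
  apply srcB.ext
  rintro ⟨i, h⟩
  rw [srcB_apply]
  simp only [LinearMap.comp_apply, LinearEquiv.coe_coe]
  rw [show smulMap γ (Pi.single i (MonoidAlgebra.single h 1))
        = Pi.single i (MonoidAlgebra.single (γ * h) (1:ℤ)) by
      show (MonoidAlgebra.single γ (1:ℤ)) • (Pi.single i (MonoidAlgebra.single h 1) :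
        Fin d → MonoidAlgebra ℤ G) = _
      rw [smul_pi_single, MonoidAlgebra.single_mul_single, one_mul]]
  rw [Phi_single, Phi_single, TensorProduct.map_tmul, rho_kgen]
  rw [show ofMulActionFinsupp ℤ G G γ (Finsupp.single h (1:ℤ))
        = Finsupp.single (γ * h) (1:ℤ) by
      simp [ofMulActionFinsupp]]
  rw [mul_assoc]

lemma tprod_j (γ : G) (x : (LinearMap.ker (aug G)) ⊗[ℤ] (LinearMap.ker (aug G))) :
    LinearMap.lTensor (LinearMap.ker (aug G)) (LinearMap.ker (aug G)).subtype
        ((((deltaG G).tprod (deltaG G)) γ) x)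
      = TensorProduct.map (deltaG G γ) (ofMulActionFinsupp ℤ G G γ)
          (LinearMap.lTensor (LinearMap.ker (aug G)) (LinearMap.ker (aug G)).subtype x) := by
  induction x using TensorProduct.induction_on with
  | zero => simp
  | tmul a b =>
      rw [Representation.tprod_apply]
      rw [TensorProduct.map_tmul, LinearMap.lTensor_tmul, LinearMap.lTensor_tmul,
        TensorProduct.map_tmul]
      congr 1
  | add x y hx hy => simp only [map_add, hx, hy]

end Stmt5Aux

set_option maxRecDepth 10000 in
set_option maxHeartbeats 2000000 in
set_option synthInstance.maxHeartbeats 200000 in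
open Stmt5Aux in
/-- Let `G` be a nontrivial finite group and take the generating set
`G \ {1}`, of `d = |G| − 1` elements (enumerated by an equivalence
`e : Fin (|G| − 1) ≃ {x : G // x ≠ 1}`).  Then the relation module
`R = R_{|G|−1}` (the kernel of the Gruenberg map) is isomorphic as a `ℤG`-module to
`ΔG ⊗_ℤ ΔG` with the diagonal `G`-action. -/
theorem stmt_5 {G : Type} [Group G] [Fintype G] (hG : Nontrivial G)
    (e : Fin (Fintype.card G - 1) ≃ {x : G // x ≠ 1}) :
    ∃ φ : (LinearMap.ker (gruenbergMap (fun i => (e i).val))) ≃ₗ[ℤ]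
        ((LinearMap.ker (aug G)) ⊗[ℤ] (LinearMap.ker (aug G))),
      ∀ (γ : G) (r : LinearMap.ker (gruenbergMap (fun i => (e i).val))),
        φ ((MonoidAlgebra.single γ (1 : ℤ)) • r)
          = (((deltaG G).tprod (deltaG G)) γ) (φ r) := by
  classical
  haveI : Module.Free ℤ (LinearMap.ker (aug G)) := Module.Free.of_basis bK
  set j := LinearMap.lTensor (LinearMap.ker (aug G)) (LinearMap.ker (aug G)).subtype with hjdef
  have hj : Function.Injective j :=
    Module.Flat.lTensor_preserves_injective_linearMap _ (Submodule.injective_subtype _)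
  have hexact0 : Function.Exact (LinearMap.ker (aug G)).subtype (aug G) := by
    rw [LinearMap.exact_iff]
    exact (Submodule.range_subtype _).symm
  have haugsurj : Function.Surjective (aug G) := fun c => ⟨Finsupp.single 1 c, aug_single 1 c⟩
  have hexact := lTensor_exact (LinearMap.ker (aug G)) hexact0 haugsurj
  have hker : LinearMap.ker (LinearMap.lTensor (LinearMap.ker (aug G)) (aug G))
      = LinearMap.range j := hexact.linearMap_ker_eq
  let jEquiv : ((LinearMap.ker (aug G)) ⊗[ℤ] (LinearMap.ker (aug G))) ≃ₗ[ℤ]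
      ↥(LinearMap.ker (LinearMap.lTensor (LinearMap.ker (aug G)) (aug G))) :=
    (LinearEquiv.ofInjective j hj) ≪≫ₗ LinearEquiv.ofEq _ _ hker.symm
  have jEquiv_coe : ∀ x, ((jEquiv x : _)
      : (LinearMap.ker (aug G)) ⊗[ℤ] (G →₀ ℤ)) = j x := by
    intro x
    show ((((LinearEquiv.ofEq _ _ hker.symm) ((LinearEquiv.ofInjective j hj) x))
        : LinearMap.ker (LinearMap.lTensor (LinearMap.ker (aug G)) (aug G)))
        : (LinearMap.ker (aug G)) ⊗[ℤ] (G →₀ ℤ)) = j x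
    rw [LinearEquiv.coe_ofEq_apply, LinearEquiv.ofInjective_apply]
  have j_symm : ∀ w, j (jEquiv.symm w)
      = (w : (LinearMap.ker (aug G)) ⊗[ℤ] (G →₀ ℤ)) := fun w => by
    calc j (jEquiv.symm w) = ((jEquiv (jEquiv.symm w) : _) : _) := (jEquiv_coe _).symm
      _ = _ := by rw [jEquiv.apply_symm_apply]
  have hcomp := comp_eq e
  have hmem : ∀ v, ((gruenbergMap (fun i => (e i).val)).restrictScalars ℤ) v = 0 ↔
      (LinearMap.lTensor (LinearMap.ker (aug G)) (aug G)) (Phi e v) = 0 := by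
    intro v
    have h1 := DFunLike.congr_fun hcomp v
    simp only [LinearMap.comp_apply, LinearEquiv.coe_coe] at h1
    constructor
    · intro h0
      have h0' : _ = (0 : G →₀ ℤ) := h1.trans (by rw [h0]; rfl)
      have h2 : (TensorProduct.rid ℤ (LinearMap.ker (aug G)))
          ((LinearMap.lTensor (LinearMap.ker (aug G)) (aug G)) (Phi e v)) = 0 := by
        apply Subtype.ext
        exact h0'
      exact (LinearEquiv.map_eq_zero_iff _).mp h2
    · intro h0
      exact (MonoidAlgebra.coeffLinearEquiv ℤ).injective (h1.symm.trans (by rw [h0]; simp))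
  have hkermap : (LinearMap.ker ((gruenbergMap (fun i => (e i).val)).restrictScalars ℤ)).map ((Phi e : _ →ₗ[ℤ] _))
      = LinearMap.ker (LinearMap.lTensor (LinearMap.ker (aug G)) (aug G)) := by
    ext x
    simp only [Submodule.mem_map, LinearMap.mem_ker]
    constructor
    · rintro ⟨v, hv, rfl⟩
      exact (hmem v).1 hv
    · intro hx
      refine ⟨(Phi e).symm x, ?_, (Phi e).apply_symm_apply x⟩
      apply (hmem _).2
      rw [LinearEquiv.apply_symm_apply]
      exact hx
  let kerE : ↥(LinearMap.ker ((gruenbergMap (fun i => (e i).val)).restrictScalars ℤ)) ≃ₗ[ℤ]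
      ↥(LinearMap.ker (LinearMap.lTensor (LinearMap.ker (aug G)) (aug G))) :=
    ((Phi e).submoduleMap (LinearMap.ker ((gruenbergMap (fun i => (e i).val)).restrictScalars ℤ))) ≪≫ₗ LinearEquiv.ofEq _ _ hkermap
  have kerE_coe : ∀ s, ((kerE s :
        LinearMap.ker (LinearMap.lTensor (LinearMap.ker (aug G)) (aug G)))
        : (LinearMap.ker (aug G)) ⊗[ℤ] (G →₀ ℤ))
      = Phi e s.1 := by
    intro s
    show ((((LinearEquiv.ofEq _ _ hkermap)
      (((Phi e).submoduleMap (LinearMap.ker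
        ((gruenbergMap (fun i => (e i).val)).restrictScalars ℤ))) s))
        : LinearMap.ker (LinearMap.lTensor (LinearMap.ker (aug G)) (aug G)))
        : (LinearMap.ker (aug G)) ⊗[ℤ] (G →₀ ℤ)) = Phi e s.1
    rw [LinearEquiv.coe_ofEq_apply, LinearEquiv.submoduleMap_apply]
  let e₀ : ↥(LinearMap.ker (gruenbergMap (fun i => (e i).val))) ≃ₗ[ℤ]
      ↥(LinearMap.ker ((gruenbergMap (fun i => (e i).val)).restrictScalars ℤ)) :=
    { toFun := fun x => ⟨x.1, x.2⟩
      invFun := fun x => ⟨x.1, x.2⟩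
      map_add' := fun _ _ => rfl
      map_smul' := fun _ _ => rfl
      left_inv := fun _ => rfl
      right_inv := fun _ => rfl }
  refine ⟨e₀ ≪≫ₗ kerE ≪≫ₗ jEquiv.symm, ?_⟩
  intro γ r
  apply hj
  have jφ : ∀ s : ↥(LinearMap.ker (gruenbergMap (fun i => (e i).val))),
      j ((e₀ ≪≫ₗ kerE ≪≫ₗ jEquiv.symm) s) = Phi e s.1 := by
    intro s
    show j (jEquiv.symm (kerE (e₀ s))) = _
    rw [j_symm]
    exact kerE_coe (e₀ s)
  rw [jφ]
  rw [show j ((((deltaG G).tprod (deltaG G)) γ) ((e₀ ≪≫ₗ kerE ≪≫ₗ jEquiv.symm) r))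
      = TensorProduct.map (deltaG G γ) (ofMulActionFinsupp ℤ G G γ)
          (j ((e₀ ≪≫ₗ kerE ≪≫ₗ jEquiv.symm) r)) from tprod_j γ _]
  rw [jφ r]
  have hval : ((MonoidAlgebra.single γ (1:ℤ)) • r).1 = (smulMap γ) r.1 := rfl
  rw [hval]
  exact DFunLike.congr_fun (Phi_comm e γ) r.1

end
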